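/- The function P(z) = (1/pi^2) * double integral over [0,pi]^2 of dk_1 dk_2 / (1 - z cos(k_1) cos(k_2)), defined for |z| < 1, satisfies the differential equation z(z^2 - 1) P''(z) + (3z^2 - 1) P'(z) + z P(z) = 0. -/

import Mathlib

open scoped Real

/-- The lattice Green's function of the two-dimensional fcc lattice. -/
noncomputable def lgf2 (z : ℝ) : ℝ :=
  (1 / π ^ 2) * ∫ k₁ in (0:ℝ)..π, ∫ k₂ in (0:ℝ)..π,
    1 / (1 - z * Real.cos k₁ * Real.cos k₂)

namespace LGF2

open Real MeasureTheory

/-- `∫₀^π cosⁿ`. -/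
noncomputable def b (n : ℕ) : ℝ := ∫ x in (0:ℝ)..π, Real.cos x ^ n

lemma b_rec (n : ℕ) : b (n + 2) = (n + 1) / (n + 2) * b n := by
  unfold b
  rw [integral_cos_pow]
  simp [Real.sin_pi]

lemma b_one : b 1 = 0 := by
  simp [b, integral_cos]

lemma b_abs_le (n : ℕ) : |b n| ≤ π := by
  have h := intervalIntegral.norm_integral_le_of_norm_le_const
    (C := 1) (f := fun x => Real.cos x ^ n) (a := (0:ℝ)) (b := π) ?_
  · simpa [b, abs_of_nonneg Real.pi_pos.le] using h
  · intro x _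
    rw [Real.norm_eq_abs, abs_pow]
    exact pow_le_one₀ (abs_nonneg _) (Real.abs_cos_le_one x)

/-- The power series coefficients of the LGF. -/
noncomputable def c (n : ℕ) : ℝ := b n ^ 2 / π ^ 2

lemma c_abs_le (n : ℕ) : |c n| ≤ 1 := by
  have h := b_abs_le n
  have h2 : b n ^ 2 ≤ π ^ 2 := by nlinarith [abs_nonneg (b n), sq_abs (b n)]
  have hπ : (0:ℝ) < π ^ 2 := by positivity
  rw [c, abs_div, abs_of_nonneg (sq_nonneg _), abs_of_nonneg hπ.le, div_le_one hπ]
  exact h2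

lemma c_one : c 1 = 0 := by simp [c, b_one]

lemma c_rec (n : ℕ) : ((n:ℝ) + 2) ^ 2 * c (n + 2) = ((n:ℝ) + 1) ^ 2 * c n := by
  have hn2 : ((n:ℝ) + 2) ≠ 0 := by positivity
  have hπ : (π:ℝ) ≠ 0 := Real.pi_ne_zero
  unfold c
  rw [b_rec]
  push_cast
  field_simp

/-- The series, its formal derivative, and second derivative. -/
noncomputable def F (z : ℝ) : ℝ := ∑' n : ℕ, c n * z ^ n
noncomputable def G (z : ℝ) : ℝ := ∑' n : ℕ, c n * ((n : ℝ) * z ^ (n - 1))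
noncomputable def H (z : ℝ) : ℝ :=
  ∑' n : ℕ, c n * ((n : ℝ) * (((n - 1 : ℕ) : ℝ) * z ^ (n - 1 - 1)))

lemma aux_sum (k j : ℕ) {r : ℝ} (h0 : 0 < r) (h1 : r < 1) :
    Summable (fun n : ℕ => (n : ℝ) ^ k * r ^ (n - j)) := by
  have hs : Summable (fun n : ℕ => (n : ℝ) ^ k * r ^ n) := by
    simpa using summable_pow_mul_geometric_of_norm_lt_one k
      (r := r) (by rwa [Real.norm_eq_abs, abs_of_pos h0])
  refine Summable.of_nonneg_of_le (fun n => by positivity) ?_ (hs.mul_left ((r ^ j)⁻¹))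
  intro n
  have hr : r ^ (n - j) ≤ r ^ n / r ^ j := by
    rw [le_div_iff₀ (by positivity), ← pow_add]
    exact pow_le_pow_of_le_one h0.le h1.le (by omega)
  calc (n : ℝ) ^ k * r ^ (n - j) ≤ (n : ℝ) ^ k * (r ^ n / r ^ j) := by
        gcongr
    _ = (r ^ j)⁻¹ * ((n : ℝ) ^ k * r ^ n) := by ring

lemma aux_sum2 {r : ℝ} (h0 : 0 ≤ r) (h1 : r < 1) :
    Summable (fun n : ℕ => ((n : ℝ) + 1) ^ 2 * r ^ n) := by
  have h2 := summable_pow_mul_geometric_of_norm_lt_one (R := ℝ) 2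
    (r := r) (by rwa [Real.norm_eq_abs, abs_of_nonneg h0])
  have h1' := summable_pow_mul_geometric_of_norm_lt_one (R := ℝ) 1
    (r := r) (by rwa [Real.norm_eq_abs, abs_of_nonneg h0])
  have h0' := summable_geometric_of_lt_one h0 h1
  refine Summable.congr ((h2.add (h1'.mul_left 2)).add h0') (fun n => ?_)
  push_cast
  ring

lemma setInt_norm_le {f : ℝ → ℝ} (hf : Continuous f) {C : ℝ} (hC : ∀ x, |f x| ≤ C) :
    (∫ x in Set.Ioc (0:ℝ) π, ‖f x‖) ≤ C * π := by
  have hm : volume (Set.Ioc (0:ℝ) π) < ⊤ := measure_Ioc_lt_top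
  have h := MeasureTheory.norm_setIntegral_le_of_norm_le_const (μ := volume)
    (s := Set.Ioc (0:ℝ) π) (f := fun x => ‖f x‖) (C := C) hm
    (fun x _ => by rw [norm_norm, Real.norm_eq_abs]; exact hC x)
  have hv : (volume (Set.Ioc (0:ℝ) π)).toReal = π := by
    rw [Real.volume_Ioc, ENNReal.toReal_ofReal (by simpa using Real.pi_pos.le)]
    ring
  calc (∫ x in Set.Ioc (0:ℝ) π, ‖f x‖) ≤ ‖∫ x in Set.Ioc (0:ℝ) π, ‖f x‖‖ := le_abs_self _
    _ ≤ C * (volume (Set.Ioc (0:ℝ) π)).toReal := h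
    _ = C * π := by rw [hv]

section rep

variable {z : ℝ} (hz : |z| < 1)

include hz in
lemma inner_eq (k₁ : ℝ) :
    (∫ k₂ in (0:ℝ)..π, 1 / (1 - z * Real.cos k₁ * Real.cos k₂)) =
      ∑' n : ℕ, (z * Real.cos k₁) ^ n * b n := by
  have hb : ∀ k₂ : ℝ, |z * Real.cos k₁ * Real.cos k₂| ≤ |z| := by
    intro k₂
    calc |z * Real.cos k₁ * Real.cos k₂| = |z| * |Real.cos k₁| * |Real.cos k₂| := by
          rw [abs_mul, abs_mul]
      _ ≤ |z| * 1 * 1 := by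
          gcongr
          · exact Real.abs_cos_le_one k₁
          · exact Real.abs_cos_le_one k₂
      _ = |z| := by ring
  have h1 : ∀ k₂ : ℝ, 1 / (1 - z * Real.cos k₁ * Real.cos k₂)
      = ∑' n : ℕ, (z * Real.cos k₁ * Real.cos k₂) ^ n := by
    intro k₂
    rw [tsum_geometric_of_norm_lt_one (by rw [Real.norm_eq_abs]; exact lt_of_le_of_lt (hb k₂) hz),
      one_div]
  simp only [h1]
  rw [intervalIntegral.integral_of_le Real.pi_pos.le]
  rw [← MeasureTheory.integral_tsum_of_summable_integral_norm ?hint ?hsum]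
  case hint =>
    intro n
    exact Continuous.integrableOn_Ioc (by fun_prop)
  case hsum =>
    have key : ∀ n : ℕ, (∫ k₂ in Set.Ioc (0:ℝ) π, ‖(z * Real.cos k₁ * Real.cos k₂) ^ n‖)
        ≤ |z| ^ n * π := by
      intro n
      refine setInt_norm_le (by fun_prop) (fun k₂ => ?_)
      rw [abs_pow]
      exact pow_le_pow_left₀ (abs_nonneg _) (hb k₂) n
    refine Summable.of_nonneg_of_le
      (fun n => integral_nonneg (fun _ => norm_nonneg _)) key
      ((summable_geometric_of_lt_one (abs_nonneg z) hz).mul_right π)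
  · refine tsum_congr fun n => ?_
    rw [← intervalIntegral.integral_of_le Real.pi_pos.le]
    simp only [mul_pow]
    rw [← mul_pow, intervalIntegral.integral_const_mul]
    rfl

include hz in
lemma rep : lgf2 z = ∑' n : ℕ, c n * z ^ n := by
  unfold lgf2
  simp only [inner_eq hz]
  rw [intervalIntegral.integral_of_le Real.pi_pos.le]
  rw [← MeasureTheory.integral_tsum_of_summable_integral_norm ?hint ?hsum]
  case hint =>
    intro n
    exact Continuous.integrableOn_Ioc (by fun_prop)
  case hsum =>
    have key : ∀ n : ℕ, (∫ k₁ in Set.Ioc (0:ℝ) π, ‖(z * Real.cos k₁) ^ n * b n‖)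
        ≤ |z| ^ n * π * π := by
      intro n
      have h := setInt_norm_le (f := fun k₁ => (z * Real.cos k₁) ^ n * b n)
        (by fun_prop) (C := |z| ^ n * π) (fun k₁ => ?_)
      · calc _ ≤ (|z| ^ n * π) * π := h
          _ = |z| ^ n * π * π := by ring
      · rw [abs_mul, abs_pow, abs_mul]
        have h1 : |z| * |Real.cos k₁| ≤ |z| * 1 := by
          gcongr; exact Real.abs_cos_le_one k₁
        calc (|z| * |Real.cos k₁|) ^ n * |b n| ≤ (|z| * 1) ^ n * π := by
              gcongr (?_ ^ n) * ?_
              · exact b_abs_le n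
          _ = |z| ^ n * π := by ring
    refine Summable.of_nonneg_of_le
      (fun n => integral_nonneg (fun _ => norm_nonneg _)) key
      (((summable_geometric_of_lt_one (abs_nonneg z) hz).mul_right π).mul_right π)
  have hπ : (π:ℝ) ≠ 0 := Real.pi_ne_zero
  rw [← tsum_mul_left]
  refine tsum_congr fun n => ?_
  rw [← intervalIntegral.integral_of_le Real.pi_pos.le]
  unfold c
  rw [intervalIntegral.integral_mul_const]
  simp only [mul_pow]
  rw [intervalIntegral.integral_const_mul]
  show 1 / π ^ 2 * (z ^ n * b n * b n) = b n ^ 2 / π ^ 2 * z ^ n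
  field_simp

end rep


section deriv

lemma F_hasDeriv {z : ℝ} (hz : |z| < 1) : HasDerivAt F (G z) z := by
  set r : ℝ := (1 + |z|) / 2 with hr
  have h0 : 0 < r := by positivity
  have h1 : r < 1 := by rw [hr]; linarith
  have hzr : |z| < r := by rw [hr]; linarith
  have key := hasDerivAt_tsum_of_isPreconnected
    (aux_sum 1 1 h0 h1) (Metric.isOpen_ball (x := (0:ℝ)) (ε := r))
    ((convex_ball (0:ℝ) r).isPreconnected)
    (g := fun n y => c n * y ^ n)
    (g' := fun n y => c n * ((n : ℝ) * y ^ (n - 1)))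
    (fun n y _ => (hasDerivAt_pow n y).const_mul (c n))
    ?bound (Metric.mem_ball_self h0) ?sum0
    (mem_ball_zero_iff.mpr (by rwa [Real.norm_eq_abs]))
  case bound =>
    intro n y hy
    have hy' : |y| ≤ r := by
      have := mem_ball_zero_iff.mp hy; rw [Real.norm_eq_abs] at this; exact this.le
    calc ‖c n * ((n : ℝ) * y ^ (n - 1))‖ = |c n| * ((n : ℝ) * |y| ^ (n - 1)) := by
          rw [Real.norm_eq_abs, abs_mul, abs_mul, abs_pow, Nat.abs_cast]
      _ ≤ 1 * ((n : ℝ) * r ^ (n - 1)) := by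
          gcongr
          · exact c_abs_le n
      _ = (n : ℝ) ^ 1 * r ^ (n - 1) := by ring
  case sum0 =>
    refine summable_of_ne_finset_zero (s := {0}) (fun n hn => ?_)
    rw [Finset.mem_singleton] at hn
    simp [zero_pow hn]
  exact key

lemma G_hasDeriv {z : ℝ} (hz : |z| < 1) : HasDerivAt G (H z) z := by
  set r : ℝ := (1 + |z|) / 2 with hr
  have h0 : 0 < r := by positivity
  have h1 : r < 1 := by rw [hr]; linarith
  have hzr : |z| < r := by rw [hr]; linarith
  have key := hasDerivAt_tsum_of_isPreconnected
    (aux_sum 2 2 h0 h1) (Metric.isOpen_ball (x := (0:ℝ)) (ε := r))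
    ((convex_ball (0:ℝ) r).isPreconnected)
    (g := fun n y => c n * ((n : ℝ) * y ^ (n - 1)))
    (g' := fun n y => c n * ((n : ℝ) * (((n - 1 : ℕ) : ℝ) * y ^ (n - 1 - 1))))
    (fun n y _ => ((hasDerivAt_pow (n - 1) y).const_mul ((n : ℝ))).const_mul (c n))
    ?bound (Metric.mem_ball_self h0) ?sum0
    (mem_ball_zero_iff.mpr (by rwa [Real.norm_eq_abs]))
  case bound =>
    intro n y hy
    have hy' : |y| ≤ r := by
      have := mem_ball_zero_iff.mp hy; rw [Real.norm_eq_abs] at this; exact this.le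
    have hcast : ((n - 1 : ℕ) : ℝ) ≤ (n : ℝ) := Nat.cast_le.mpr (Nat.sub_le n 1)
    have hee : n - 1 - 1 = n - 2 := by omega
    calc ‖c n * ((n : ℝ) * (((n - 1 : ℕ) : ℝ) * y ^ (n - 1 - 1)))‖
        = |c n| * ((n : ℝ) * (((n - 1 : ℕ) : ℝ) * |y| ^ (n - 1 - 1))) := by
          rw [Real.norm_eq_abs, abs_mul, abs_mul, abs_mul, abs_pow, Nat.abs_cast, Nat.abs_cast]
      _ ≤ 1 * ((n : ℝ) * ((n : ℝ) * r ^ (n - 1 - 1))) := by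
          gcongr
          · exact c_abs_le n
      _ = (n : ℝ) ^ 2 * r ^ (n - 2) := by rw [hee]; ring
  case sum0 =>
    refine summable_of_ne_finset_zero (s := {0, 1}) (fun n hn => ?_)
    simp only [Finset.mem_insert, Finset.mem_singleton] at hn
    push_neg at hn
    have : n - 1 ≠ 0 := by omega
    simp [zero_pow this]
  exact key

lemma key_alg {z : ℝ} (hz : |z| < 1) :
    z * (z ^ 2 - 1) * H z + (3 * z ^ 2 - 1) * G z + z * F z = 0 := by
  set r : ℝ := (1 + |z|) / 2 with hr
  have h0 : 0 < r := by positivity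
  have h1 : r < 1 := by rw [hr]; linarith
  have hzr : |z| ≤ r := by rw [hr]; linarith
  have hzr' : |z| ≤ r := hzr
  have habs : ∀ (k j : ℕ), |c k * ((k:ℝ)^j * z ^ (k - j))| ≤ (k:ℝ)^j * r ^ (k - j) := by
    intro k j
    calc |c k * ((k:ℝ)^j * z ^ (k - j))| = |c k| * ((k:ℝ)^j * |z| ^ (k - j)) := by
          rw [abs_mul, abs_mul, abs_pow, abs_pow, Nat.abs_cast]
      _ ≤ 1 * ((k:ℝ)^j * r ^ (k - j)) := by
          gcongr
          · exact c_abs_le k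
      _ = (k:ℝ)^j * r ^ (k - j) := by ring
  have S0 : Summable (fun n : ℕ => c n * z ^ n) := by
    refine Summable.of_norm_bounded (aux_sum 0 0 h0 h1) (fun n => ?_)
    have h := habs n 0
    simp only [pow_zero, one_mul, Nat.sub_zero] at h ⊢
    rw [Real.norm_eq_abs]
    exact h
  have S1 : Summable (fun n : ℕ => c n * ((n : ℝ) * z ^ (n - 1))) := by
    refine Summable.of_norm_bounded (aux_sum 1 1 h0 h1) (fun n => ?_)
    have h := habs n 1
    simp only [pow_one] at h ⊢
    rw [Real.norm_eq_abs]
    exact h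
  have S2 : Summable (fun n : ℕ => c n * ((n : ℝ) * (((n - 1 : ℕ) : ℝ) * z ^ (n - 1 - 1)))) := by
    refine Summable.of_norm_bounded (aux_sum 2 2 h0 h1) (fun n => ?_)
    have hcast : ((n - 1 : ℕ) : ℝ) ≤ (n : ℝ) := Nat.cast_le.mpr (Nat.sub_le n 1)
    calc ‖c n * ((n : ℝ) * (((n - 1 : ℕ) : ℝ) * z ^ (n - 1 - 1)))‖
        = |c n| * ((n : ℝ) * (((n - 1 : ℕ) : ℝ) * |z| ^ (n - 1 - 1))) := by
          rw [Real.norm_eq_abs, abs_mul, abs_mul, abs_mul, abs_pow, Nat.abs_cast, Nat.abs_cast]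
      _ ≤ 1 * ((n : ℝ) * ((n : ℝ) * r ^ (n - 1 - 1))) := by
          gcongr
          · exact c_abs_le n
      _ = (n : ℝ) ^ 2 * r ^ (n - 2) := by rw [show n - 1 - 1 = n - 2 from by omega]; ring
  have Sv : Summable (fun n : ℕ => c n * (n : ℝ) ^ 2 * z ^ (n - 1)) := by
    refine Summable.of_norm_bounded (aux_sum 2 1 h0 h1) (fun n => ?_)
    have h := habs n 2
    rw [Real.norm_eq_abs, abs_mul, abs_mul, abs_pow, abs_pow, Nat.abs_cast]
    calc |c n| * (n:ℝ)^2 * |z| ^ (n-1) ≤ 1 * (n:ℝ)^2 * r ^ (n-1) := by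
          gcongr
          · exact c_abs_le n
      _ = (n:ℝ)^2 * r ^ (n-1) := by ring
  have Su : Summable (fun n : ℕ => c n * ((n : ℝ) + 1) ^ 2 * z ^ (n + 1)) := by
    refine Summable.of_norm_bounded (aux_sum2 h0.le h1) (fun n => ?_)
    rw [Real.norm_eq_abs, abs_mul, abs_mul, abs_pow, abs_pow]
    have h2 : |(n:ℝ) + 1| = (n:ℝ) + 1 := abs_of_nonneg (by positivity)
    rw [h2]
    calc |c n| * ((n:ℝ)+1)^2 * |z| ^ (n+1) ≤ 1 * ((n:ℝ)+1)^2 * (r ^ (n+1)) := by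
          gcongr
          · exact c_abs_le n
      _ ≤ 1 * ((n:ℝ)+1)^2 * r ^ n :=
          mul_le_mul_of_nonneg_left (pow_le_pow_of_le_one h0.le h1.le (Nat.le_succ n))
            (by positivity)
      _ = ((n:ℝ)+1)^2 * r ^ n := by ring
  unfold F G H
  rw [← tsum_mul_left, ← tsum_mul_left, ← tsum_mul_left,
    ← Summable.tsum_add (S2.mul_left (z * (z ^ 2 - 1))) (S1.mul_left (3 * z ^ 2 - 1)),
    ← Summable.tsum_add ((S2.mul_left (z * (z ^ 2 - 1))).add (S1.mul_left (3 * z ^ 2 - 1)))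
      (S0.mul_left z)]
  have ht : ∀ n : ℕ,
      (z * (z ^ 2 - 1) * (c n * ((n : ℝ) * (((n - 1 : ℕ) : ℝ) * z ^ (n - 1 - 1)))) +
        (3 * z ^ 2 - 1) * (c n * ((n : ℝ) * z ^ (n - 1)))) + z * (c n * z ^ n)
      = c n * ((n : ℝ) + 1) ^ 2 * z ^ (n + 1) - c n * (n : ℝ) ^ 2 * z ^ (n - 1) := by
    intro n
    match n with
    | 0 => norm_num [mul_comm]
    | 1 => simp [c_one]
    | (n + 2) =>
      simp only [show n + 2 - 1 = n + 1 from rfl, show n + 2 - 1 - 1 = n from rfl,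
        show n + 2 + 1 = n + 3 from rfl]
      push_cast
      ring
  rw [tsum_congr ht, Summable.tsum_sub Su Sv, sub_eq_zero]
  rw [Summable.tsum_eq_zero_add Sv, Summable.tsum_eq_zero_add ((summable_nat_add_iff 1).mpr Sv)]
  norm_num [c_one]
  refine tsum_congr fun n => ?_
  rw [show n + 1 + 1 = n + 2 from rfl]
  linear_combination (-(z ^ (n + 1))) * c_rec n

end deriv

end LGF2

/-- The LGF of the 2D fcc lattice satisfies
`z(z²-1) P''(z) + (3z²-1) P'(z) + z P(z) = 0` for `|z| < 1`. -/
theorem lgf2_ode (z : ℝ) (hz : |z| < 1) :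
    z * (z ^ 2 - 1) * iteratedDeriv 2 lgf2 z +
      (3 * z ^ 2 - 1) * deriv lgf2 z + z * lgf2 z = 0 := by
  open LGF2 in
  have hball : ∀ w : ℝ, w ∈ Metric.ball (0:ℝ) 1 → |w| < 1 := by
    intro w hw
    have := mem_ball_zero_iff.mp hw
    rwa [Real.norm_eq_abs] at this
  have hmem : z ∈ Metric.ball (0:ℝ) 1 := mem_ball_zero_iff.mpr
    (by rwa [Real.norm_eq_abs])
  have hopen : IsOpen (Metric.ball (0:ℝ) 1) := Metric.isOpen_ball
  have hF : Set.EqOn lgf2 LGF2.F (Metric.ball (0:ℝ) 1) := fun w hw => LGF2.rep (hball w hw)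
  have hd1 : ∀ w ∈ Metric.ball (0:ℝ) 1, deriv lgf2 w = LGF2.G w := by
    intro w hw
    have hev : lgf2 =ᶠ[nhds w] LGF2.F := Filter.eventuallyEq_of_mem (hopen.mem_nhds hw) hF
    rw [hev.deriv_eq, (LGF2.F_hasDeriv (hball w hw)).deriv]
  have hd2 : iteratedDeriv 2 lgf2 z = LGF2.H z := by
    rw [(by norm_num : (2:ℕ) = 1 + 1), iteratedDeriv_succ, iteratedDeriv_one]
    have hev : deriv lgf2 =ᶠ[nhds z] LGF2.G := Filter.eventuallyEq_of_mem
      (hopen.mem_nhds hmem) hd1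
    rw [hev.deriv_eq, (LGF2.G_hasDeriv hz).deriv]
  rw [hd2, hd1 z hmem, hF hmem]
  exact LGF2.key_alg hz
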